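/- A priori estimate (abstract scalar version of Lemma 1): let m, e > 0 and d ∈ ℝ with d² < 4 m e (in weighted form: d² < 4/( (1/m)(1/e) )). Suppose v ∈ H₀¹(0,1) satisfies, for all φ ∈ H₀¹(0,1), ∫₀¹ m v φ + e v' φ' + d v φ' dx = ∫₀¹ (h + k u + j u') φ dx, where h, k, j ∈ ℝ are constants and u ∈ H¹(0,1). Then there exist constants m̃, ẽ > 0 and H̃, K̃, J̃ ≥ 0, depending only on m, e, d, h, k, j, such that m̃‖v‖²_{L²} + ẽ‖v'‖²_{L²} ≤ H̃ + K̃‖u‖²_{L²} + J̃‖u'‖²_{L²}. -/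

import Mathlib

open Set intervalIntegral

/-- Scalar 1-D instance of the a priori estimate of Lemma 1: a weak solution
v ∈ H₀¹(0,1) of m v − (e v' + d v)' = h + k u + j u' satisfies an energy bound
in terms of u, with constants depending only on m, e, d, h, k, j. -/
theorem a_priori_estimate (m e d h k j : ℝ) (hm : 0 < m) (he : 0 < e)
    (hd : d ^ 2 < 4 * m * e) :
    ∃ mt et Ht Kt Jt : ℝ, 0 < mt ∧ 0 < et ∧ 0 ≤ Ht ∧ 0 ≤ Kt ∧ 0 ≤ Jt ∧
      ∀ u u' v v' : ℝ → ℝ,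
        (∀ x : ℝ, HasDerivAt u (u' x) x) → Continuous u' →
        (∀ x : ℝ, HasDerivAt v (v' x) x) → Continuous v' →
        v 0 = 0 → v 1 = 0 →
        (∀ φ φ' : ℝ → ℝ, (∀ x : ℝ, HasDerivAt φ (φ' x) x) → Continuous φ' →
          φ 0 = 0 → φ 1 = 0 →
          (∫ x in (0:ℝ)..1, m * v x * φ x + e * v' x * φ' x + d * v x * φ' x) =
            ∫ x in (0:ℝ)..1, (h + k * u x + j * u' x) * φ x) →
        mt * (∫ x in (0:ℝ)..1, (v x) ^ 2) + et * (∫ x in (0:ℝ)..1, (v' x) ^ 2) ≤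
          Ht + Kt * (∫ x in (0:ℝ)..1, (u x) ^ 2) +
            Jt * (∫ x in (0:ℝ)..1, (u' x) ^ 2) := by
  refine ⟨m / 2, e, 3 / (2 * m) * h ^ 2, 3 / (2 * m) * k ^ 2, 3 / (2 * m) * j ^ 2,
    by positivity, he, by positivity, by positivity, by positivity, ?_⟩
  intro u u' v v' hu hu' hv hv' hv0 hv1 hweak
  have hcu : Continuous u := Differentiable.continuous (fun x => (hu x).differentiableAt)
  have hcv : Continuous v := Differentiable.continuous (fun x => (hv x).differentiableAt)
  -- key pointwise Young-type inequality
  have key_pt : ∀ a b : ℝ, a * b ≤ m / 6 * b ^ 2 + 3 / (2 * m) * a ^ 2 := by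
    intro a b
    rw [div_mul_eq_mul_div, div_mul_eq_mul_div,
      div_add_div _ _ (by norm_num : (6:ℝ) ≠ 0) (by positivity : (2*m) ≠ 0),
      le_div_iff₀ (by positivity)]
    nlinarith [sq_nonneg (m * b - 3 * a)]
  -- integrability facts
  have Iv2 : IntervalIntegrable (fun x => m * v x ^ 2) MeasureTheory.volume 0 1 :=
    (continuous_const.mul (hcv.pow 2)).intervalIntegrable 0 1
  have Iv'2 : IntervalIntegrable (fun x => e * v' x ^ 2) MeasureTheory.volume 0 1 :=
    (continuous_const.mul (hv'.pow 2)).intervalIntegrable 0 1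
  have Ivv' : IntervalIntegrable (fun x => d * (v x * v' x)) MeasureTheory.volume 0 1 :=
    (continuous_const.mul (hcv.mul hv')).intervalIntegrable 0 1
  -- ∫ v v' = 0
  have hvv' : (∫ x in (0:ℝ)..1, v x * v' x) = 0 := by
    have hsq : ∀ x ∈ uIcc (0:ℝ) 1, HasDerivAt (fun y => v y ^ 2 / 2) (v x * v' x) x := by
      intro x _
      have : HasDerivAt (fun y => v y ^ 2 / 2) ((2:ℕ) * v x ^ (2 - 1) * v' x / 2) x :=
        ((hv x).pow 2).div_const 2
      convert this using 1
      simp [pow_one]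
      ring
    have := intervalIntegral.integral_eq_sub_of_hasDerivAt hsq
      ((hcv.mul hv').intervalIntegrable 0 1)
    rw [this, hv0, hv1]
    norm_num
  -- the weak formulation tested with φ = v
  have key := hweak v v' hv hv' hv0 hv1
  have hsplit : (∫ x in (0:ℝ)..1, m * v x * v x + e * v' x * v' x + d * v x * v' x)
      = m * (∫ x in (0:ℝ)..1, (v x) ^ 2) + e * (∫ x in (0:ℝ)..1, (v' x) ^ 2)
        + d * (∫ x in (0:ℝ)..1, v x * v' x) := by
    rw [← intervalIntegral.integral_const_mul, ← intervalIntegral.integral_const_mul,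
      ← intervalIntegral.integral_const_mul, ← intervalIntegral.integral_add Iv2 Iv'2,
      ← intervalIntegral.integral_add (Iv2.add Iv'2) Ivv']
    apply intervalIntegral.integral_congr
    intro x _
    ring
  -- bound the right-hand side
  have hrhs : (∫ x in (0:ℝ)..1, (h + k * u x + j * u' x) * v x)
      ≤ ∫ x in (0:ℝ)..1, m / 2 * (v x) ^ 2
          + 3 / (2 * m) * (h ^ 2 + k ^ 2 * (u x) ^ 2 + j ^ 2 * (u' x) ^ 2) := by
    apply intervalIntegral.integral_mono_on zero_le_one
    · exact (((continuous_const.add (continuous_const.mul hcu)).add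
        (continuous_const.mul hu')).mul hcv).intervalIntegrable 0 1
    · exact ((continuous_const.mul (hcv.pow 2)).add (continuous_const.mul
        ((continuous_const.add (continuous_const.mul (hcu.pow 2))).add
          (continuous_const.mul (hu'.pow 2))))).intervalIntegrable 0 1
    · intro x _
      have h1 := key_pt h (v x)
      have h2 := key_pt (k * u x) (v x)
      have h3 := key_pt (j * u' x) (v x)
      nlinarith [h1, h2, h3]
  -- split the right-hand estimate integral
  have hsplit2 : (∫ x in (0:ℝ)..1, m / 2 * (v x) ^ 2
        + 3 / (2 * m) * (h ^ 2 + k ^ 2 * (u x) ^ 2 + j ^ 2 * (u' x) ^ 2))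
      = m / 2 * (∫ x in (0:ℝ)..1, (v x) ^ 2)
        + 3 / (2 * m) * (h ^ 2 + k ^ 2 * (∫ x in (0:ℝ)..1, (u x) ^ 2)
          + j ^ 2 * (∫ x in (0:ℝ)..1, (u' x) ^ 2)) := by
    rw [intervalIntegral.integral_add (f := fun x => m / 2 * (v x) ^ 2)
      (g := fun x => 3 / (2 * m) * (h ^ 2 + k ^ 2 * (u x) ^ 2 + j ^ 2 * (u' x) ^ 2))
      ((continuous_const.mul (hcv.pow 2)).intervalIntegrable 0 1)
      ((continuous_const.mul ((continuous_const.add (continuous_const.mul (hcu.pow 2))).add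
        (continuous_const.mul (hu'.pow 2)))).intervalIntegrable 0 1),
      intervalIntegral.integral_const_mul, intervalIntegral.integral_const_mul,
      intervalIntegral.integral_add (f := fun x => h ^ 2 + k ^ 2 * (u x) ^ 2)
        (g := fun x => j ^ 2 * (u' x) ^ 2)
        ((continuous_const.add (continuous_const.mul (hcu.pow 2))).intervalIntegrable 0 1)
        ((continuous_const.mul (hu'.pow 2)).intervalIntegrable 0 1),
      intervalIntegral.integral_add (f := fun _ => h ^ 2) (g := fun x => k ^ 2 * (u x) ^ 2)
        ((continuous_const : Continuous fun _ : ℝ => h ^ 2).intervalIntegrable 0 1)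
        ((continuous_const.mul (hcu.pow 2)).intervalIntegrable 0 1),
      intervalIntegral.integral_const, intervalIntegral.integral_const_mul,
      intervalIntegral.integral_const_mul]
    simp
  rw [hsplit, hvv', mul_zero, add_zero] at key
  rw [hsplit2] at hrhs
  rw [← key] at hrhs
  set A := ∫ x in (0:ℝ)..1, (v x) ^ 2
  have hmA : m * A = m / 2 * A + m / 2 * A := by ring
  nlinarith [hrhs, hmA]
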